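/- If W satisfies the minimal constraints, W·ln W, W², and W³ are integrable, and t + t²/2 + Var(X)/2 ≥ 1, where t := 1 − μ/2, μ is the purity of W, and Var(X) := ∫ W(q,p) · (π·W(q,p) − μ/2)² dq dp, then S[W] ≥ 1 + ln π. -/

import Mathlib

open Real MeasureTheory

lemma log_quad_bound {x : ℝ} (hx : 0 < x) (hx1 : x ≤ 1) :
    Real.log x ≤ (x - 1) - (x - 1) ^ 2 / 2 := by
  set f : ℝ → ℝ := fun y => Real.log y - (y - 1) + (y - 1) ^ 2 / 2 with hf
  have hder : ∀ y : ℝ, 0 < y → HasDerivAt f ((y - 1) ^ 2 / y) y := by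
    intro y hy
    have h := ((Real.hasDerivAt_log hy.ne').sub ((hasDerivAt_id y).sub_const 1)).add
      ((((hasDerivAt_id y).sub_const 1).pow 2).div_const 2)
    simp only [id_eq] at h
    have hy0 : y ≠ 0 := hy.ne'
    have e : (y - 1) ^ 2 / y = y⁻¹ - 1 + ((2 : ℕ) : ℝ) * (y - 1) ^ (2 - 1) * 1 / 2 := by
      norm_num
      field_simp
      ring
    rw [e]
    exact h
  have hmono : MonotoneOn f (Set.Ioi 0) := by
    apply monotoneOn_of_deriv_nonneg (convex_Ioi 0)
    · intro y hy
      exact ((hder y hy).continuousAt).continuousWithinAt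
    · intro y hy
      rw [interior_Ioi] at hy
      exact ((hder y hy).differentiableAt).differentiableWithinAt
    · intro y hy
      rw [interior_Ioi] at hy
      rw [(hder y hy).deriv]
      have hy' : (0:ℝ) < y := hy
      positivity
  have h1 : f x ≤ f 1 := hmono (Set.mem_Ioi.mpr hx) (Set.mem_Ioi.mpr one_pos) hx1
  simp only [hf, Real.log_one] at h1
  norm_num at h1
  linarith

/-- If `W` satisfies the minimal constraints, `W·ln W`, `W²`, `W³` are integrable, and
`t + t²/2 + Var(X)/2 ≥ 1` with `t = 1 − μ/2`, `μ = 2π ∫ W²` the purity and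
`Var(X) = ∫ W (π W − μ/2)²`, then `S[W] ≥ 1 + ln π`. -/
theorem wigner_conjecture_of_variance_condition (W : ℝ × ℝ → ℝ) (hmeas : Measurable W)
    (hpos : ∀ z, 0 ≤ W z)
    (hnorm : ∫ z, W z = 1)
    (hbound : ∀ z, Real.pi * W z ≤ 1)
    (hlog : Integrable (fun z => W z * Real.log (W z)))
    (hsq : Integrable (fun z => (W z) ^ 2))
    (hcube : Integrable (fun z => (W z) ^ 3))
    (hcond : (1 - (2 * Real.pi * ∫ z, (W z) ^ 2) / 2)
        + (1 - (2 * Real.pi * ∫ z, (W z) ^ 2) / 2) ^ 2 / 2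
        + (∫ z, W z * (Real.pi * W z - (2 * Real.pi * ∫ w, (W w) ^ 2) / 2) ^ 2) / 2 ≥ 1) :
    (-∫ z, W z * Real.log (W z)) ≥ 1 + Real.log Real.pi := by
  have hW : Integrable W := by
    by_contra h
    rw [integral_undef h] at hnorm
    norm_num at hnorm
  set B : ℝ := ∫ z, (W z) ^ 2 with hB
  set C : ℝ := ∫ z, (W z) ^ 3 with hC
  -- generic integral of a cubic polynomial in W
  have hpoly : ∀ a b c : ℝ,
      ∫ z, (a * W z + b * (W z) ^ 2 + c * (W z) ^ 3) = a + b * B + c * C := by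
    intro a b c
    have h1 : Integrable (fun z => a * W z) := hW.const_mul a
    have h2 : Integrable (fun z => b * (W z) ^ 2) := hsq.const_mul b
    have h3 : Integrable (fun z => c * (W z) ^ 3) := hcube.const_mul c
    have h12 : Integrable (fun z => a * W z + b * (W z) ^ 2) := h1.add h2
    rw [integral_add h12 h3, integral_add h1 h2,
      integral_const_mul, integral_const_mul, integral_const_mul, hnorm]
    ring
  -- rewrite the variance integral in hcond
  have hvar : (∫ z, W z * (Real.pi * W z - (2 * Real.pi * B) / 2) ^ 2)
      = (Real.pi * B) ^ 2 + (-(2 * Real.pi * (Real.pi * B))) * B + Real.pi ^ 2 * C := by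
    rw [← hpoly ((Real.pi * B) ^ 2) (-(2 * Real.pi * (Real.pi * B))) (Real.pi ^ 2)]
    congr 1
    funext z
    ring
  rw [hvar] at hcond
  -- pointwise bound
  have hpt : ∀ z, W z * Real.log (W z) ≤
      (-Real.log Real.pi - 3 / 2) * W z + (2 * Real.pi) * (W z) ^ 2
        + (-(Real.pi ^ 2 / 2)) * (W z) ^ 3 := by
    intro z
    rcases eq_or_lt_of_le (hpos z) with h0 | h0
    · rw [← h0]; norm_num
    · have hx : 0 < Real.pi * W z := mul_pos Real.pi_pos h0
      have hlogeq : Real.log (W z) = Real.log (Real.pi * W z) - Real.log Real.pi := by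
        rw [Real.log_mul Real.pi_ne_zero h0.ne']
        ring
      have hq := log_quad_bound hx (hbound z)
      have hq' : W z * Real.log (Real.pi * W z) ≤
          W z * ((Real.pi * W z - 1) - (Real.pi * W z - 1) ^ 2 / 2) :=
        mul_le_mul_of_nonneg_left hq (hpos z)
      rw [hlogeq]
      nlinarith [hq']
  -- integrate the pointwise bound
  have hintle : (∫ z, W z * Real.log (W z)) ≤
      (-Real.log Real.pi - 3 / 2) + (2 * Real.pi) * B + (-(Real.pi ^ 2 / 2)) * C := by
    rw [← hpoly (-Real.log Real.pi - 3 / 2) (2 * Real.pi) (-(Real.pi ^ 2 / 2))]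
    exact integral_mono hlog
      (((hW.const_mul _).add (hsq.const_mul _)).add (hcube.const_mul _)) hpt
  nlinarith [hintle, hcond]
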